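/- Let p be a prime number. Then the set of rational numbers a for which the polynomial T_p(x) − a is irreducible over ℚ is infinite. -/

import Mathlib

open Polynomial


lemma cheb_eval_one : ∀ n : ℕ, (Chebyshev.T ℤ n).eval 1 = 1 := by
  intro n
  induction n using Nat.twoStepInduction with
  | zero => simp [Chebyshev.T_zero]
  | one => simp [Chebyshev.T_one]
  | more n ih1 ih2 =>
    rw [show ((n + 2 : ℕ) : ℤ) = ((n : ℤ) + 2) by push_cast; ring, Chebyshev.T_add_two]
    push_cast at ih1 ih2
    simp [ih1, ih2]

lemma cheb_key : ∀ n : ℕ, (Chebyshev.T ℤ ((n:ℤ)+1)).coeff (n+1) = 2^n ∧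
    (Chebyshev.T ℤ ((n:ℤ)+1)).natDegree ≤ n+1 := by
  intro n
  induction n using Nat.twoStepInduction with
  | zero => norm_num [Chebyshev.T_one]
  | one =>
    rw [show ((1:ℕ):ℤ)+1 = 2 by norm_num, Chebyshev.T_two]
    constructor
    · norm_num [coeff_sub, coeff_one]
    · compute_degree
  | more n ih1 ih2 =>
    push_cast at ih1 ih2 ⊢
    rw [show ((n:ℤ) + 2 + 1) = ((n:ℤ)+1) + 2 by ring, Chebyshev.T_add_two]
    have hmul : (2 * X * Chebyshev.T ℤ ((n:ℤ)+1+1)).natDegree ≤ n + 3 := by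
      refine le_trans natDegree_mul_le ?_
      have h1 : ((2 : ℤ[X]) * X).natDegree ≤ 1 := by compute_degree
      have := ih2.2
      omega
    constructor
    · rw [coeff_sub]
      have h0 : (Chebyshev.T ℤ ((n:ℤ)+1)).coeff (n+2+1) = 0 :=
        coeff_eq_zero_of_natDegree_lt (lt_of_le_of_lt ih1.2 (by omega))
      have hc : (2 * X * Chebyshev.T ℤ ((n:ℤ)+1+1)).coeff (n+2+1)
          = 2 * (Chebyshev.T ℤ ((n:ℤ)+1+1)).coeff (n+1+1) := by
        rw [mul_assoc, show ((2:ℤ[X]) = C 2) by simp, coeff_C_mul,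
          show n+2+1 = (n+1+1)+1 by ring, coeff_X_mul]
      rw [hc, h0, ih2.1]
      ring
    · refine le_trans (natDegree_sub_le _ _) (max_le (le_trans hmul (by omega))
        (le_trans ih1.2 (by omega)))

lemma cheb_natDegree {n : ℕ} (hn : 0 < n) : (Chebyshev.T ℤ n).natDegree = n := by
  obtain ⟨m, rfl⟩ := Nat.exists_eq_add_of_lt hn
  rw [show ((0 + m + 1 : ℕ) : ℤ) = ((m:ℤ)+1) by push_cast; ring]
  simp only [zero_add]
  refine le_antisymm (cheb_key m).2 ?_
  refine le_natDegree_of_ne_zero ?_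
  rw [(cheb_key m).1]
  positivity

lemma cheb_leadingCoeff {n : ℕ} (hn : 0 < n) :
    (Chebyshev.T ℤ n).leadingCoeff = 2^(n-1) := by
  obtain ⟨m, rfl⟩ := Nat.exists_eq_add_of_lt hn
  simp only [zero_add] at *
  rw [leadingCoeff, cheb_natDegree hn,
    show ((m + 1 : ℕ) : ℤ) = ((m:ℤ)+1) by push_cast; ring, (cheb_key m).1]
  simp


lemma mirror_isPrimitive {f : ℤ[X]} (h : f.IsPrimitive) : f.mirror.IsPrimitive := by
  intro r hr
  obtain ⟨q, hq⟩ := hr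
  apply h r
  refine ⟨q.mirror, ?_⟩
  conv_lhs => rw [← f.mirror_mirror, hq]
  rw [show (C r * q).mirror = (C r).mirror * q.mirror from mirror_mul_of_domain _ _, mirror_C]

lemma irreducible_of_mirror_irreducible {f : ℤ[X]} (h : Irreducible f.mirror) :
    Irreducible f := by
  constructor
  · intro hu
    obtain ⟨r, hr, rfl⟩ := Polynomial.isUnit_iff.mp hu
    exact h.not_isUnit (by rw [mirror_C]; exact Polynomial.isUnit_iff.mpr ⟨r, hr, rfl⟩)
  · intro a b hab
    have := h.isUnit_or_isUnit (by rw [hab, mirror_mul_of_domain])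
    rcases this with hu | hu
    · left
      obtain ⟨r, hr, hC⟩ := Polynomial.isUnit_iff.mp hu
      have : a = C r := by rw [← a.mirror_mirror, ← hC, mirror_C]
      rw [this]; exact Polynomial.isUnit_iff.mpr ⟨r, hr, rfl⟩
    · right
      obtain ⟨r, hr, hC⟩ := Polynomial.isUnit_iff.mp hu
      have : b = C r := by rw [← b.mirror_mirror, ← hC, mirror_C]
      rw [this]; exact Polynomial.isUnit_iff.mpr ⟨r, hr, rfl⟩

lemma main_irr (p : ℕ) (hp : p.Prime) (l : ℕ) (hl : l.Prime) (hl2 : l ≠ 2) :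
    Irreducible (Chebyshev.T ℚ p - C (((2 * l : ℕ) : ℚ))⁻¹) := by
  have hppos : 0 < p := hp.pos
  obtain ⟨m, hm⟩ : ∃ m, p = m + 1 := ⟨p - 1, by omega⟩
  subst hm
  clear hppos
  have hppos : 0 < m + 1 := Nat.succ_pos m
  have hl3 : 3 ≤ l := by
    rcases hl.two_le.lt_or_eq with h | h; omega; omega
  have hlZ : Prime (l : ℤ) := Nat.prime_iff_prime_int.mp hl
  have hlne : (l : ℤ) ≠ 0 := by exact_mod_cast hl.ne_zero
  set T : ℤ[X] := Chebyshev.T ℤ (m + 1) with hT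
  set c : ℤ := 2 * l with hc
  set G : ℤ[X] := C c * T - 1 with hG
  have hdT : T.natDegree = m + 1 := cheb_natDegree hppos
  have hcT : T.coeff (m + 1) = 2 ^ m := by
    have h := cheb_leadingCoeff hppos
    rw [Nat.cast_add, Nat.cast_one] at h
    rwa [leadingCoeff, hdT, Nat.add_sub_cancel] at h
  have hcne : c ≠ 0 := by positivity
  -- coefficients of G
  have hGcoeff : ∀ k : ℕ, k ≠ 0 → G.coeff k = c * T.coeff k := by
    intro k hk
    simp [hG, coeff_sub, coeff_C_mul, coeff_one, hk]
  have hGzero : G.coeff 0 = c * T.coeff 0 - 1 := by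
    simp [hG, coeff_sub, coeff_C_mul, coeff_one]
  have hGp : G.coeff (m + 1) = (l : ℤ) * 2 ^ (m + 1) := by
    rw [hGcoeff (m + 1) (by omega), hcT, hc]; ring
  -- natDegree of G
  have hdG : G.natDegree = m + 1 := by
    refine le_antisymm ?_ ?_
    · refine le_trans (natDegree_sub_le _ _) ?_
      rw [natDegree_C_mul hcne, hdT, natDegree_one]
      omega
    · refine le_natDegree_of_ne_zero ?_
      rw [hGp]
      positivity
  have hG0odd : ¬ (2 : ℤ) ∣ G.coeff 0 := by
    rw [hGzero, hc]
    intro h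
    have h2 : (2:ℤ) ∣ 2 * ((l:ℤ) * T.coeff 0) := Dvd.intro _ rfl
    rw [← mul_assoc] at h2
    have := dvd_sub h2 h
    rw [sub_sub_cancel] at this
    norm_num at this
  have hG0ne : G.coeff 0 ≠ 0 := by
    intro h; rw [h] at hG0odd; exact hG0odd (dvd_zero 2)
  have hGne : G ≠ 0 := fun h => hG0ne (by rw [h]; simp)
  have htd : G.natTrailingDegree = 0 := natTrailingDegree_eq_zero.mpr (Or.inr hG0ne)
  -- G primitive
  have hTeval : T.eval 1 = 1 := by
    have h := cheb_eval_one (m + 1)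
    rwa [Nat.cast_add, Nat.cast_one] at h
  have hGeval : G.eval 1 = 2 * l - 1 := by
    simp [hG, hTeval, hc]
  have hGprim : G.IsPrimitive := by
    intro r hr
    obtain ⟨q, hq⟩ := hr
    have h1 : r ∣ 2 * (l:ℤ) - 1 := ⟨q.eval 1, by rw [← hGeval, hq]; simp⟩
    have h2 : r ∣ (l:ℤ) * 2 ^ (m + 1) := ⟨q.coeff (m + 1), by
      rw [← hGp, hq, coeff_C_mul]⟩
    have c2 : IsCoprime (2 * (l:ℤ) - 1) 2 := ⟨-1, (l:ℤ), by ring⟩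
    have cl : IsCoprime (2 * (l:ℤ) - 1) (l : ℤ) := ⟨-1, 2, by ring⟩
    exact (cl.mul_right c2.pow_right).isUnit_of_dvd' h1 h2
  -- mirror coefficients
  have hmd : G.mirror.natDegree = m + 1 := by rw [mirror_natDegree, hdG]
  have hmc : ∀ n : ℕ, n ≤ m + 1 → G.mirror.coeff n = G.coeff (m + 1 - n) := by
    intro n hn
    rw [coeff_mirror, htd, hdG, add_zero, revAt_le hn]
  have hmne : G.mirror ≠ 0 := fun h => hGne (mirror_eq_zero.mp h)
  -- Eisenstein
  set P : Ideal ℤ := Ideal.span {(l : ℤ)} with hP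
  have hPprime : P.IsPrime := (Ideal.span_singleton_prime hlne).mpr hlZ
  have hirrM : Irreducible G.mirror := by
    refine irreducible_of_eisenstein_criterion hPprime ?_ ?_ ?_ ?_ ?_
    · -- leading coeff not in P
      rw [leadingCoeff, hmd, hmc (m + 1) le_rfl, Nat.sub_self]
      rw [hP, Ideal.mem_span_singleton]
      intro hdvd
      have h1 : (l:ℤ) ∣ c * T.coeff 0 := ⟨2 * T.coeff 0, by rw [hc]; ring⟩
      have : (l:ℤ) ∣ 1 := by
        have := dvd_sub h1 hdvd
        rwa [hGzero, sub_sub_cancel] at this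
      have := Int.le_of_dvd one_pos this
      omega
    · intro n hn
      have hdeg : G.mirror.degree = ((m + 1 : ℕ) : WithBot ℕ) := by
        rw [degree_eq_natDegree hmne, hmd]
      rw [hdeg] at hn
      have hnp : n < m + 1 := by exact_mod_cast hn
      rw [hmc n hnp.le, hGcoeff (m + 1 - n) (by omega), hP, Ideal.mem_span_singleton]
      exact ⟨2 * T.coeff (m + 1 - n), by rw [hc]; ring⟩
    · rw [degree_eq_natDegree hmne, hmd]
      exact_mod_cast hppos
    · rw [hmc 0 (by omega), Nat.sub_zero, hGp, hP, Ideal.span_singleton_pow,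
        Ideal.mem_span_singleton]
      intro hdvd
      have h2 : (l:ℤ) ∣ 2 ^ (m + 1) := by
        have hll : (l:ℤ) * (l:ℤ) ∣ (l:ℤ) * 2 ^ (m + 1) := (pow_two (l:ℤ)) ▸ hdvd
        exact (mul_dvd_mul_iff_left hlne).mp hll
      have := hlZ.dvd_of_dvd_pow h2
      have := Int.le_of_dvd (by norm_num) this
      omega
    · exact mirror_isPrimitive hGprim
  have hirrG : Irreducible G := irreducible_of_mirror_irreducible hirrM
  -- move to ℚ
  have hirrQ : Irreducible (G.map (algebraMap ℤ ℚ)) :=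
    (hGprim.irreducible_iff_irreducible_map_fraction_map).mp hirrG
  have hmap : G.map (algebraMap ℤ ℚ) = C (c : ℚ) * Chebyshev.T ℚ (m + 1) - 1 := by
    rw [hG, Polynomial.map_sub, Polynomial.map_mul, Polynomial.map_one, map_C,
      Chebyshev.map_T]
    simp
  have hcQ : (c : ℚ) ≠ 0 := by exact_mod_cast hcne
  have hassoc : Associated (G.map (algebraMap ℤ ℚ))
      (Chebyshev.T ℚ (m + 1) - C (((2 * l : ℕ) : ℚ))⁻¹) := by
    refine ⟨(Polynomial.isUnit_C.mpr ((isUnit_iff_ne_zero.mpr (inv_ne_zero hcQ)))).unit, ?_⟩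
    have hce : ((2 * l : ℕ) : ℚ) = (c : ℚ) := by push_cast [hc]; ring
    rw [IsUnit.unit_spec, hmap, hce]
    rw [sub_mul, mul_comm, ← mul_assoc, ← C_mul, inv_mul_cancel₀ hcQ]
    simp [mul_comm]
  have := hassoc.irreducible hirrQ
  convert this using 2
  simp

/-- For a prime `p`, there are infinitely many rational numbers `a`
such that `T_p(x) - a` is irreducible over `ℚ`. -/
theorem infinite_irreducible_chebyshev_sub_const (p : ℕ) (hp : p.Prime) :
    {a : ℚ | Irreducible (Chebyshev.T ℚ p - C a)}.Infinite := by
  have hE : {l : ℕ | l.Prime ∧ l ≠ 2}.Infinite := by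
    have : {l : ℕ | l.Prime ∧ l ≠ 2} = {l : ℕ | l.Prime} \ {2} := by
      ext l; simp [Set.mem_diff, and_comm]
    rw [this]
    exact Nat.infinite_setOf_prime.diff (Set.finite_singleton 2)
  have himg : ((fun l : ℕ => (((2 * l : ℕ) : ℚ))⁻¹) '' {l : ℕ | l.Prime ∧ l ≠ 2}).Infinite := by
    refine hE.image ?_
    intro a ha b hb hab
    simp only at hab
    have h1 : ((2 * a : ℕ) : ℚ) = ((2 * b : ℕ) : ℚ) := inv_injective hab
    have : (2 * a : ℕ) = 2 * b := by exact_mod_cast h1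
    omega
  refine himg.mono ?_
  rintro x ⟨l, hl, rfl⟩
  exact main_irr p hp l hl.1 hl.2
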